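/- Let φ : ℝ → ℝ be a C³, 2π-periodic solution of φ̈ + |φ|^{1/2}φ = 0 that is odd, satisfies φ(τ+π) = −φ(τ), φ(τ) ≥ 0 on [0,π], and φ̇(τ) ≥ 0 on [0,π/2]. Define I(q) := −∫_{π−2q}^{π} φ̈(τ)φ̈(τ+2q)dτ for q ∈ [0,π/2]. Then I(0) = 0, I(q) ≥ 0 for all q ∈ [0,π/2], I is continuously differentiable on [0,π/2] with I'(q) ≥ 0 (so I is nondecreasing), and I(π/2) = ∫₀^{π} (φ̈(τ))² dτ. -/

import Mathlib

open Real


theorem hasDerivAt_abs_rpow_half_mul_self (x : ℝ) :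
    HasDerivAt (fun y : ℝ => |y| ^ ((1:ℝ)/2) * y) (3/2 * |x| ^ ((1:ℝ)/2)) x := by
  rcases lt_trichotomy x 0 with hx | hx | hx
  · have hne : -x ≠ 0 := neg_ne_zero.mpr (ne_of_lt hx)
    have h1 : HasDerivAt (fun y : ℝ => (-y) ^ ((1:ℝ)/2)) (1/2 * (-x) ^ ((1:ℝ)/2 - 1) * (-1)) x :=
      (Real.hasDerivAt_rpow_const (p := (1:ℝ)/2) (Or.inl hne)).comp x (hasDerivAt_neg x)
    have h2 := h1.mul (hasDerivAt_id x)
    have heq : (fun y : ℝ => (-y) ^ ((1:ℝ)/2) * y) =ᶠ[nhds x] (fun y => |y| ^ ((1:ℝ)/2) * y) := by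
      filter_upwards [eventually_lt_nhds hx] with y hy
      rw [abs_of_neg hy]
    have h3 := h2.congr_of_eventuallyEq heq.symm
    refine h3.congr_deriv (Eq.symm ?_)
    rw [abs_of_neg hx]
    have h4 : (-x) ^ ((1:ℝ)/2 - 1) * (-x) = (-x) ^ ((1:ℝ)/2) := by
      rw [← Real.rpow_add_one hne]; norm_num
    simp only [id_eq]
    linear_combination (-1/2) * h4
  · subst hx
    rw [hasDerivAt_iff_tendsto_slope]
    have hc : ContinuousAt (fun y : ℝ => |y| ^ ((1:ℝ)/2)) 0 := by
      have : ContinuousAt (fun z : ℝ => z ^ ((1:ℝ)/2)) (|(0:ℝ)|) := by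
        simpa using Real.continuousAt_rpow_const 0 ((1:ℝ)/2) (Or.inr (by norm_num))
      exact this.comp continuous_abs.continuousAt
    have h0 : |(0:ℝ)| ^ ((1:ℝ)/2) = 0 := by
      simp [Real.zero_rpow (by norm_num : ((1:ℝ)/2) ≠ 0)]
    have := hc.tendsto
    rw [h0] at this
    have hval : (3/2 * |(0:ℝ)| ^ ((1:ℝ)/2)) = 0 := by rw [h0]; ring
    rw [hval]
    refine (this.mono_left nhdsWithin_le_nhds).congr' ?_
    filter_upwards [self_mem_nhdsWithin] with y (hy : y ≠ 0)
    simp only [slope_def_field]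
    field_simp
    simp
  · have hne : x ≠ 0 := ne_of_gt hx
    have h1 : HasDerivAt (fun y : ℝ => y ^ ((1:ℝ)/2)) (1/2 * x ^ ((1:ℝ)/2 - 1)) x :=
      Real.hasDerivAt_rpow_const (Or.inl hne)
    have h2 := h1.mul (hasDerivAt_id x)
    have heq : (fun y : ℝ => y ^ ((1:ℝ)/2) * y) =ᶠ[nhds x] (fun y => |y| ^ ((1:ℝ)/2) * y) := by
      filter_upwards [eventually_gt_nhds hx] with y hy
      rw [abs_of_pos hy]
    have h3 := h2.congr_of_eventuallyEq heq.symm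
    refine h3.congr_deriv (Eq.symm ?_)
    rw [abs_of_pos hx]
    have h4 : x ^ ((1:ℝ)/2 - 1) * x = x ^ ((1:ℝ)/2) := by
      rw [← Real.rpow_add_one hne]; norm_num
    simp only [id_eq]
    linear_combination (-1/2) * h4

noncomputable def psiF (φ : ℝ → ℝ) : ℝ → ℝ := fun τ => |φ τ| ^ ((1:ℝ)/2) * φ τ

noncomputable def dpsiF (φ : ℝ → ℝ) : ℝ → ℝ := fun τ => 3/2 * |φ τ| ^ ((1:ℝ)/2) * deriv φ τ

section basic

variable {φ : ℝ → ℝ}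

theorem psiF_hasDerivAt (hφ : Differentiable ℝ φ) (t : ℝ) :
    HasDerivAt (psiF φ) (3/2 * |φ t| ^ ((1:ℝ)/2) * deriv φ t) t := by
  have h := (hasDerivAt_abs_rpow_half_mul_self (φ t)).comp t (hφ t).hasDerivAt
  exact h

theorem psiF_continuous (hφ : Continuous φ) : Continuous (psiF φ) :=
  ((continuous_abs.comp hφ).rpow_const (fun _ => Or.inr (by norm_num))).mul hφ

theorem dpsiF_continuous (hφ : Continuous φ) (hd : Continuous (deriv φ)) :
    Continuous (dpsiF φ) :=
  (continuous_const.mul ((continuous_abs.comp hφ).rpow_const (fun _ => Or.inr (by norm_num)))).mul hd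

end basic

section sym

variable {φ : ℝ → ℝ}

theorem phi_zero (hodd : ∀ τ, φ (-τ) = -φ τ) : φ 0 = 0 := by
  have := hodd 0; rw [neg_zero] at this; linarith

theorem phi_sym (hodd : ∀ τ, φ (-τ) = -φ τ) (hanti : ∀ τ, φ (τ + π) = -φ τ) (τ : ℝ) :
    φ (π - τ) = φ τ := by
  have h1 : φ (-τ + π) = -φ (-τ) := hanti (-τ)
  rw [hodd τ] at h1
  have : π - τ = -τ + π := by ring
  rw [this, h1, neg_neg]

theorem psiF_zero (hodd : ∀ τ, φ (-τ) = -φ τ) : psiF φ 0 = 0 := by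
  simp [psiF, phi_zero hodd]

theorem psiF_sym (hodd : ∀ τ, φ (-τ) = -φ τ) (hanti : ∀ τ, φ (τ + π) = -φ τ) (τ : ℝ) :
    psiF φ (π - τ) = psiF φ τ := by
  simp [psiF, phi_sym hodd hanti τ]

theorem psiF_anti (hanti : ∀ τ, φ (τ + π) = -φ τ) (τ : ℝ) :
    psiF φ (τ + π) = -psiF φ τ := by
  simp only [psiF, hanti τ, abs_neg]; ring

theorem deriv_sym (hφ : Differentiable ℝ φ) (hodd : ∀ τ, φ (-τ) = -φ τ)
    (hanti : ∀ τ, φ (τ + π) = -φ τ) (τ : ℝ) :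
    deriv φ (π - τ) = -deriv φ τ := by
  have h1 : HasDerivAt (fun t : ℝ => φ (π - t)) (deriv φ (π - τ) * (-1)) τ :=
    (hφ (π - τ)).hasDerivAt.comp τ ((hasDerivAt_id τ).const_sub π)
  have h2 : (fun t : ℝ => φ (π - t)) = φ := funext fun t => phi_sym hodd hanti t
  rw [h2] at h1
  have := h1.deriv
  linarith [this]

theorem dpsiF_sym (hφ : Differentiable ℝ φ) (hodd : ∀ τ, φ (-τ) = -φ τ)
    (hanti : ∀ τ, φ (τ + π) = -φ τ) (τ : ℝ) :
    dpsiF φ (π - τ) = -dpsiF φ τ := by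
  simp only [dpsiF, phi_sym hodd hanti τ, deriv_sym hφ hodd hanti τ]; ring

end sym

section signs

variable {φ : ℝ → ℝ}

theorem psiF_nonneg (hpos : ∀ τ ∈ Set.Icc (0:ℝ) π, 0 ≤ φ τ) {x : ℝ}
    (h0 : 0 ≤ x) (h1 : x ≤ π) : 0 ≤ psiF φ x :=
  mul_nonneg (Real.rpow_nonneg (abs_nonneg _) _) (hpos x ⟨h0, h1⟩)

theorem dpsiF_nonneg (hder : ∀ τ ∈ Set.Icc (0:ℝ) (π/2), 0 ≤ deriv φ τ) {x : ℝ}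
    (h0 : 0 ≤ x) (h1 : x ≤ π/2) : 0 ≤ dpsiF φ x :=
  mul_nonneg (mul_nonneg (by norm_num) (Real.rpow_nonneg (abs_nonneg _) _)) (hder x ⟨h0, h1⟩)

/-- Wronskian-type inequality: `φ s * φ' b ≤ φ b * φ' s` for `0 ≤ s ≤ b ≤ π/2`. -/
theorem wronskian_ineq (hφ : ContDiff ℝ 3 φ)
    (hode : ∀ τ, deriv (deriv φ) τ + |φ τ| ^ ((1:ℝ)/2) * φ τ = 0)
    (hpos : ∀ τ ∈ Set.Icc (0:ℝ) π, 0 ≤ φ τ)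
    (hder : ∀ τ ∈ Set.Icc (0:ℝ) (π/2), 0 ≤ deriv φ τ)
    {s b : ℝ} (hs : 0 ≤ s) (hsb : s ≤ b) (hb : b ≤ π/2) :
    φ s * deriv φ b ≤ φ b * deriv φ s := by
  have hπ : (0:ℝ) < π := Real.pi_pos
  have hφ1 : Differentiable ℝ φ := hφ.differentiable (by norm_num)
  have hdc : Continuous (deriv φ) := hφ.continuous_deriv (by norm_num)
  have hφ2 : Differentiable ℝ (deriv φ) := by
    have h3 : ContDiff ℝ (2 + 1 : WithTop ℕ∞) φ := by
      have e : (3 : WithTop ℕ∞) = 2 + 1 := by rfl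
      rwa [e] at hφ
    exact ((contDiff_succ_iff_deriv.mp h3).2.2).differentiable (by norm_num)
  set K : ℝ → ℝ := fun t => φ t * deriv φ s - φ s * deriv φ t with hK
  have hKd : ∀ t, HasDerivAt K (deriv φ t * deriv φ s - φ s * deriv (deriv φ) t) t := by
    intro t
    exact ((hφ1 t).hasDerivAt.mul_const (deriv φ s)).sub
      (((hφ2 t).hasDerivAt).const_mul (φ s))
  have hmono : MonotoneOn K (Set.Icc s b) := by
    apply monotoneOn_of_deriv_nonneg (convex_Icc s b)
    · exact ((hφ1.continuous.mul continuous_const).sub (continuous_const.mul hdc)).continuousOn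
    · intro x _
      exact ((hKd x).differentiableAt).differentiableWithinAt
    · intro x hx
      rw [interior_Icc] at hx
      rw [(hKd x).deriv]
      have hx0 : 0 ≤ x := le_trans hs (le_of_lt hx.1)
      have hx2 : x ≤ π/2 := le_trans (le_of_lt hx.2) hb
      have h1 : 0 ≤ deriv φ x := hder x ⟨hx0, hx2⟩
      have h2 : 0 ≤ deriv φ s := hder s ⟨hs, le_trans hsb hb⟩
      have h3 : 0 ≤ φ s := hpos s ⟨hs, le_trans (le_trans hsb hb) (by linarith)⟩
      have h4 : deriv (deriv φ) x = -(|φ x| ^ ((1:ℝ)/2) * φ x) := by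
        have := hode x; linarith
      rw [h4]
      have h5 : 0 ≤ |φ x| ^ ((1:ℝ)/2) * φ x :=
        mul_nonneg (Real.rpow_nonneg (abs_nonneg _) _)
          (hpos x ⟨hx0, by linarith⟩)
      nlinarith
  have h0 : K s ≤ K b := hmono (Set.left_mem_Icc.mpr hsb) (Set.right_mem_Icc.mpr hsb) hsb
  have : K s = 0 := by simp [hK]
  rw [this] at h0
  simp only [hK] at h0
  linarith

/-- Key pointwise inequality for the integrand of `S`. -/
theorem key_pointwise (hφ : ContDiff ℝ 3 φ)
    (hode : ∀ τ, deriv (deriv φ) τ + |φ τ| ^ ((1:ℝ)/2) * φ τ = 0)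
    (hodd : ∀ τ, φ (-τ) = -φ τ) (hanti : ∀ τ, φ (τ + π) = -φ τ)
    (hpos : ∀ τ ∈ Set.Icc (0:ℝ) π, 0 ≤ φ τ)
    (hder : ∀ τ ∈ Set.Icc (0:ℝ) (π/2), 0 ≤ deriv φ τ)
    {c : ℝ} (hc0 : 0 ≤ c) (hcπ : c ≤ π) :
    ∀ s, 0 ≤ s → s ≤ c → 0 ≤ dpsiF φ s * psiF φ (c - s) + dpsiF φ (c - s) * psiF φ s := by
  have hφ1 : Differentiable ℝ φ := hφ.differentiable (by norm_num)
  -- core: assume s ≤ c - s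
  have core : ∀ s, 0 ≤ s → s ≤ c → 2 * s ≤ c →
      0 ≤ dpsiF φ s * psiF φ (c - s) + dpsiF φ (c - s) * psiF φ s := by
    intro s hs0 _ h2s
    have hs2 : s ≤ π/2 := by linarith
    have hcs0 : 0 ≤ c - s := by linarith
    have hcsπ : c - s ≤ π := by linarith
    by_cases hcs : c - s ≤ π/2
    · have h1 := dpsiF_nonneg hder hs0 hs2
      have h2 := psiF_nonneg hpos hcs0 hcsπ
      have h3 := dpsiF_nonneg hder hcs0 hcs
      have h4 := psiF_nonneg hpos hs0 (by linarith)
      positivity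
    · push_neg at hcs
      set b : ℝ := π - (c - s) with hb
      have hb0 : 0 ≤ b := by simp [hb]; linarith
      have hbh : b ≤ π/2 := by simp [hb]; linarith
      have hsble : s ≤ b := by simp [hb]; linarith
      have hcsb : c - s = π - b := by simp [hb]
      have e1 : psiF φ (c - s) = psiF φ b := by rw [hcsb, psiF_sym hodd hanti]
      have e2 : dpsiF φ (c - s) = -dpsiF φ b := by
        rw [hcsb, dpsiF_sym hφ1 hodd hanti]
      rw [e1, e2]
      -- goal: 0 ≤ dψ s * ψ b + (-dψ b) * ψ s
      have hw : φ s * deriv φ b ≤ φ b * deriv φ s :=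
        wronskian_ineq hφ hode hpos hder hs0 hsble hbh
      have hfs : 0 ≤ |φ s| ^ ((1:ℝ)/2) := Real.rpow_nonneg (abs_nonneg _) _
      have hfb : 0 ≤ |φ b| ^ ((1:ℝ)/2) := Real.rpow_nonneg (abs_nonneg _) _
      have hps : 0 ≤ φ s := hpos s ⟨hs0, by linarith⟩
      have hpb : 0 ≤ φ b := hpos b ⟨hb0, by linarith⟩
      simp only [psiF, dpsiF]
      have expand : 3/2 * |φ s| ^ ((1:ℝ)/2) * deriv φ s * (|φ b| ^ ((1:ℝ)/2) * φ b) +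
          -(3/2 * |φ b| ^ ((1:ℝ)/2) * deriv φ b) * (|φ s| ^ ((1:ℝ)/2) * φ s)
          = 3/2 * (|φ s| ^ ((1:ℝ)/2) * |φ b| ^ ((1:ℝ)/2)) *
            (φ b * deriv φ s - φ s * deriv φ b) := by ring
      rw [expand]
      have : 0 ≤ φ b * deriv φ s - φ s * deriv φ b := by linarith
      positivity
  intro s hs0 hsc
  rcases le_total (2*s) c with h | h
  · exact core s hs0 hsc h
  · have := core (c - s) (by linarith) (by linarith) (by linarith)
    rw [sub_sub_cancel] at this
    linarith

end signs

noncomputable def WF (φ : ℝ → ℝ) (c : ℝ) : ℝ := ∫ s in (0:ℝ)..c, psiF φ s * psiF φ (c - s)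

noncomputable def SF (φ : ℝ → ℝ) (c : ℝ) : ℝ := ∫ s in (0:ℝ)..c, dpsiF φ s * psiF φ (c - s)

noncomputable def FF (φ : ℝ → ℝ) (q t : ℝ) : ℝ :=
  (2*q) * (psiF φ (2*q*t) * psiF φ (2*q - 2*q*t))

noncomputable def FF' (φ : ℝ → ℝ) (q t : ℝ) : ℝ :=
  2 * (psiF φ (2*q*t) * psiF φ (2*q - 2*q*t))
  + (2*q) * ((dpsiF φ (2*q*t) * (2*t)) * psiF φ (2*q - 2*q*t)
      + psiF φ (2*q*t) * (dpsiF φ (2*q - 2*q*t) * (2 - 2*t)))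

section deriv

variable {φ : ℝ → ℝ}

theorem FF_hasDerivAt (hφ1 : Differentiable ℝ φ) (t q : ℝ) :
    HasDerivAt (fun q => FF φ q t) (FF' φ q t) q := by
  have h_in1 : HasDerivAt (fun q : ℝ => 2*q*t) (2*t) q := by
    simpa using ((hasDerivAt_id q).const_mul (2:ℝ)).mul_const t
  have h_in2 : HasDerivAt (fun q : ℝ => 2*q - 2*q*t) (2 - 2*t) q := by
    have := ((hasDerivAt_id q).const_mul (2:ℝ)).sub h_in1
    simpa [Pi.sub_def] using this
  have hψ1 : HasDerivAt (fun q : ℝ => psiF φ (2*q*t)) (dpsiF φ (2*q*t) * (2*t)) q :=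
    by have h := (psiF_hasDerivAt hφ1 (2*q*t)).comp q h_in1; exact h
  have hψ2 : HasDerivAt (fun q : ℝ => psiF φ (2*q - 2*q*t))
      (dpsiF φ (2*q - 2*q*t) * (2 - 2*t)) q :=
    by have h := (psiF_hasDerivAt hφ1 (2*q - 2*q*t)).comp q h_in2; exact h
  have hprod := hψ1.mul hψ2
  have h2q : HasDerivAt (fun q : ℝ => 2*q) (2:ℝ) q := by
    simpa using (hasDerivAt_id q).const_mul (2:ℝ)
  have hall := h2q.mul hprod
  simpa [FF, FF', mul_assoc, Pi.mul_def] using hall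

theorem FF_uncurry_continuous (hφ : Continuous φ) :
    Continuous (fun p : ℝ × ℝ => FF φ p.1 p.2) := by
  have hψc := psiF_continuous hφ
  have c1 : Continuous fun p : ℝ × ℝ => 2*p.1*p.2 := by fun_prop
  have c2 : Continuous fun p : ℝ × ℝ => 2*p.1 - 2*p.1*p.2 := by fun_prop
  exact ((continuous_const.mul continuous_fst)).mul ((hψc.comp c1).mul (hψc.comp c2))

theorem FF'_uncurry_continuous (hφ : Continuous φ) (hd : Continuous (deriv φ)) :
    Continuous (fun p : ℝ × ℝ => FF' φ p.1 p.2) := by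
  have hψc := psiF_continuous hφ
  have hdψc := dpsiF_continuous hφ hd
  have c1 : Continuous fun p : ℝ × ℝ => 2*p.1*p.2 := by fun_prop
  have c2 : Continuous fun p : ℝ × ℝ => 2*p.1 - 2*p.1*p.2 := by fun_prop
  apply Continuous.add
  · exact continuous_const.mul ((hψc.comp c1).mul (hψc.comp c2))
  · refine (continuous_const.mul continuous_fst).mul (Continuous.add ?_ ?_)
    · exact ((hdψc.comp c1).mul (by fun_prop)).mul (hψc.comp c2)
    · exact (hψc.comp c1).mul ((hdψc.comp c2).mul (by fun_prop))

/-- Differentiation under the integral sign for `q ↦ ∫_0^1 FF φ q t dt`. -/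
theorem FF_integral_hasDerivAt (hφ : Continuous φ) (hd : Continuous (deriv φ))
    (hφ1 : Differentiable ℝ φ) (q₀ : ℝ) :
    HasDerivAt (fun q => ∫ t in (0:ℝ)..1, FF φ q t) (∫ t in (0:ℝ)..1, FF' φ q₀ t) q₀ := by
  have hψc := psiF_continuous hφ
  have hdψc := dpsiF_continuous hφ hd
  -- bound on compact set
  set R : ℝ := 2*|q₀| + 2 with hR
  have hRpos : 0 < R := by positivity
  obtain ⟨C₁, hC₁⟩ := (isCompact_Icc (a := -R) (b := R)).exists_bound_of_continuousOn
    hψc.continuousOn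
  obtain ⟨C₂, hC₂⟩ := (isCompact_Icc (a := -R) (b := R)).exists_bound_of_continuousOn
    hdψc.continuousOn
  set C : ℝ := max C₁ C₂ with hCdef
  have h0mem : (0:ℝ) ∈ Set.Icc (-R) R := by
    rw [Set.mem_Icc, hR]; constructor <;> nlinarith [abs_nonneg q₀]
  have hC0 : 0 ≤ C := by
    have := hC₁ 0 h0mem
    have h0 : 0 ≤ C₁ := le_trans (norm_nonneg _) this
    exact le_trans h0 (le_max_left _ _)
  have hCψ : ∀ y ∈ Set.Icc (-R) R, |psiF φ y| ≤ C := fun y hy =>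
    le_trans (hC₁ y hy) (le_max_left _ _)
  have hCdψ : ∀ y ∈ Set.Icc (-R) R, |dpsiF φ y| ≤ C := fun y hy =>
    le_trans (hC₂ y hy) (le_max_right _ _)
  set B : ℝ := 2*C^2 + (2*|q₀|+2) * (4*C^2) with hB
  refine (intervalIntegral.hasDerivAt_integral_of_dominated_loc_of_deriv_le
    (F := FF φ) (F' := FF' φ) (x₀ := q₀) (a := 0) (b := 1) (bound := fun _ => B)
    (s := Metric.ball q₀ 1) (Metric.ball_mem_nhds q₀ one_pos)
    (Filter.Eventually.of_forall fun x =>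
      ((FF_uncurry_continuous hφ).comp (by fun_prop : Continuous fun t : ℝ => (x, t))
        |>.aestronglyMeasurable))
    (Continuous.intervalIntegrable
      ((FF_uncurry_continuous hφ).comp (by fun_prop : Continuous fun t : ℝ => (q₀, t))) _ _)
    ((FF'_uncurry_continuous hφ hd).comp
      (by fun_prop : Continuous fun t : ℝ => (q₀, t)) |>.aestronglyMeasurable)
    ?_ (intervalIntegrable_const) ?_).2
  · -- bound
    apply Filter.Eventually.of_forall
    intro t ht x hx
    rw [Set.uIoc_of_le (by norm_num : (0:ℝ) ≤ 1)] at ht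
    have ht0 : 0 < t := ht.1
    have ht1 : t ≤ 1 := ht.2
    rw [Metric.mem_ball, Real.dist_eq] at hx
    have hxb : |x| ≤ |q₀| + 1 := by
      have := abs_sub_abs_le_abs_sub x q₀
      linarith
    have harg1 : 2*x*t ∈ Set.Icc (-R) R := by
      have : |2*x*t| ≤ R := by
        rw [abs_mul, abs_mul]
        have h2 : |(2:ℝ)| = 2 := by norm_num
        have htabs : |t| ≤ 1 := by rw [abs_of_pos ht0]; exact ht1
        rw [h2]
        nlinarith [abs_nonneg x, abs_nonneg t]
      exact abs_le.mp this
    have harg2 : 2*x - 2*x*t ∈ Set.Icc (-R) R := by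
      have : |2*x - 2*x*t| ≤ R := by
        have : 2*x - 2*x*t = 2*x*(1-t) := by ring
        rw [this, abs_mul, abs_mul]
        have h2 : |(2:ℝ)| = 2 := by norm_num
        have htabs : |1 - t| ≤ 1 := by rw [abs_of_nonneg (by linarith)]; linarith
        rw [h2]
        nlinarith [abs_nonneg x, abs_nonneg (1-t)]
      exact abs_le.mp this
    have b1 := hCψ _ harg1
    have b2 := hCψ _ harg2
    have b3 := hCdψ _ harg1
    have b4 := hCdψ _ harg2
    have habs1 : |psiF φ (2*x*t) * psiF φ (2*x - 2*x*t)| ≤ C^2 := by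
      rw [abs_mul]
      nlinarith [abs_nonneg (psiF φ (2*x*t)), abs_nonneg (psiF φ (2*x - 2*x*t))]
    have htabs : |t| ≤ 1 := by rw [abs_of_pos ht0]; exact ht1
    have habs2 : |(dpsiF φ (2*x*t) * (2*t)) * psiF φ (2*x - 2*x*t)
        + psiF φ (2*x*t) * (dpsiF φ (2*x - 2*x*t) * (2 - 2*t))| ≤ 4*C^2 := by
      have e1 : |(dpsiF φ (2*x*t) * (2*t)) * psiF φ (2*x - 2*x*t)| ≤ 2*C^2 := by
        rw [abs_mul, abs_mul]
        have h2t : |2*t| ≤ 2 := by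
          rw [abs_of_pos (by linarith : (0:ℝ) < 2*t)]; linarith
        have st1 : |dpsiF φ (2*x*t)| * |2*t| ≤ C * 2 :=
          mul_le_mul b3 h2t (abs_nonneg _) hC0
        have st2 : |dpsiF φ (2*x*t)| * |2*t| * |psiF φ (2*x - 2*x*t)| ≤ C * 2 * C :=
          mul_le_mul st1 b2 (abs_nonneg _) (by positivity)
        nlinarith [st2]
      have e2 : |psiF φ (2*x*t) * (dpsiF φ (2*x - 2*x*t) * (2 - 2*t))| ≤ 2*C^2 := by
        rw [abs_mul, abs_mul]
        have h2t : |2 - 2*t| ≤ 2 := by rw [abs_of_nonneg (by linarith)]; linarith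
        have st1 : |dpsiF φ (2*x - 2*x*t)| * |2 - 2*t| ≤ C * 2 :=
          mul_le_mul b4 h2t (abs_nonneg _) hC0
        have st2 : |psiF φ (2*x*t)| * (|dpsiF φ (2*x - 2*x*t)| * |2 - 2*t|) ≤ C * (C * 2) :=
          mul_le_mul b1 st1 (by positivity) hC0
        nlinarith [st2]
      calc _ ≤ _ + _ := abs_add_le _ _
        _ ≤ 2*C^2 + 2*C^2 := add_le_add e1 e2
        _ = 4*C^2 := by ring
    have : ‖FF' φ x t‖ = |FF' φ x t| := rfl
    rw [this]
    show |FF' φ x t| ≤ B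
    calc |FF' φ x t| ≤ |2 * (psiF φ (2*x*t) * psiF φ (2*x - 2*x*t))|
          + |(2*x) * ((dpsiF φ (2*x*t) * (2*t)) * psiF φ (2*x - 2*x*t)
            + psiF φ (2*x*t) * (dpsiF φ (2*x - 2*x*t) * (2 - 2*t)))| := abs_add_le _ _
      _ ≤ 2*C^2 + (2*|q₀|+2) * (4*C^2) := by
          apply add_le_add
          · rw [abs_mul]; simp only [abs_two]
            nlinarith [habs1]
          · rw [abs_mul, abs_mul, abs_two]
            have st1 : (2:ℝ) * |x| ≤ 2 * (|q₀| + 1) := by linarith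
            have st2 : (2:ℝ) * |x| * |(dpsiF φ (2*x*t) * (2*t)) * psiF φ (2*x - 2*x*t)
                + psiF φ (2*x*t) * (dpsiF φ (2*x - 2*x*t) * (2 - 2*t))|
                ≤ 2 * (|q₀| + 1) * (4*C^2) :=
              mul_le_mul st1 habs2 (abs_nonneg _) (by positivity)
            nlinarith [st2]
      _ = B := rfl
  · -- differentiability
    apply Filter.Eventually.of_forall
    intro t _ x _
    exact FF_hasDerivAt hφ1 t x

end deriv

section ints

variable {φ : ℝ → ℝ}

theorem SF_nonneg (hφ : ContDiff ℝ 3 φ)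
    (hode : ∀ τ, deriv (deriv φ) τ + |φ τ| ^ ((1:ℝ)/2) * φ τ = 0)
    (hodd : ∀ τ, φ (-τ) = -φ τ) (hanti : ∀ τ, φ (τ + π) = -φ τ)
    (hpos : ∀ τ ∈ Set.Icc (0:ℝ) π, 0 ≤ φ τ)
    (hder : ∀ τ ∈ Set.Icc (0:ℝ) (π/2), 0 ≤ deriv φ τ)
    {c : ℝ} (hc0 : 0 ≤ c) (hcπ : c ≤ π) : 0 ≤ SF φ c := by
  have hψc := psiF_continuous hφ.continuous
  have hdψc := dpsiF_continuous hφ.continuous (hφ.continuous_deriv (by norm_num))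
  have hcont1 : Continuous fun s => psiF φ (c - s) :=
    hψc.comp (continuous_const.sub continuous_id)
  have hcont2 : Continuous fun s => dpsiF φ (c - s) :=
    hdψc.comp (continuous_const.sub continuous_id)
  have hrefl : (∫ s in (0:ℝ)..c, dpsiF φ (c - s) * psiF φ s) = SF φ c := by
    have e1 : (∫ s in (0:ℝ)..c, dpsiF φ (c - s) * psiF φ s)
        = ∫ s in (0:ℝ)..c, (fun x => dpsiF φ x * psiF φ (c - x)) (c - s) := by
      apply intervalIntegral.integral_congr
      intro s _
      simp only
      rw [sub_sub_cancel]
    rw [e1, intervalIntegral.integral_comp_sub_left (fun x => dpsiF φ x * psiF φ (c - x)) c]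
    simp [SF]
  have h2S : 2 * SF φ c = ∫ s in (0:ℝ)..c,
      (dpsiF φ s * psiF φ (c - s) + dpsiF φ (c - s) * psiF φ s) := by
    rw [intervalIntegral.integral_add (f := fun s => dpsiF φ s * psiF φ (c - s))
      (g := fun s => dpsiF φ (c - s) * psiF φ s) ((hdψc.mul hcont1).intervalIntegrable 0 c)
      ((hcont2.mul hψc).intervalIntegrable 0 c), hrefl, SF]
    ring
  have hnn : 0 ≤ ∫ s in (0:ℝ)..c,
      (dpsiF φ s * psiF φ (c - s) + dpsiF φ (c - s) * psiF φ s) := by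
    apply intervalIntegral.integral_nonneg hc0
    intro u hu
    exact key_pointwise hφ hode hodd hanti hpos hder hc0 hcπ u hu.1 hu.2
  linarith [h2S ▸ hnn]

theorem neg_int_eq_WF (hφ : ContDiff ℝ 3 φ)
    (hode : ∀ τ, deriv (deriv φ) τ + |φ τ| ^ ((1:ℝ)/2) * φ τ = 0)
    (hodd : ∀ τ, φ (-τ) = -φ τ) (hanti : ∀ τ, φ (τ + π) = -φ τ) (q : ℝ) :
    -(∫ τ in (π - 2 * q)..π, deriv (deriv φ) τ * deriv (deriv φ) (τ + 2 * q))
      = WF φ (2*q) := by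
  have hode' : ∀ τ, deriv (deriv φ) τ = -psiF φ τ := by
    intro τ; have := hode τ; simp only [psiF]; linarith
  have step1 : (∫ τ in (π - 2 * q)..π, deriv (deriv φ) τ * deriv (deriv φ) (τ + 2 * q))
      = ∫ τ in (π - 2 * q)..π, psiF φ τ * psiF φ (τ + 2 * q) := by
    apply intervalIntegral.integral_congr
    intro τ _
    show deriv (deriv φ) τ * deriv (deriv φ) (τ + 2 * q) = psiF φ τ * psiF φ (τ + 2 * q)
    rw [hode' τ, hode' (τ + 2*q)]
    ring
  have step2 : (∫ x in (0:ℝ)..(2*q), (fun τ => psiF φ τ * psiF φ (τ + 2 * q)) (x + (π - 2*q)))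
      = ∫ τ in (π - 2 * q)..π, psiF φ τ * psiF φ (τ + 2 * q) := by
    rw [intervalIntegral.integral_comp_add_right (fun τ => psiF φ τ * psiF φ (τ + 2 * q))
      (π - 2*q)]
    norm_num
  have step3 : (∫ x in (0:ℝ)..(2*q), (fun τ => psiF φ τ * psiF φ (τ + 2 * q)) (x + (π - 2*q)))
      = ∫ x in (0:ℝ)..(2*q), -(psiF φ x * psiF φ (2*q - x)) := by
    apply intervalIntegral.integral_congr
    intro x _
    simp only
    have e1 : x + (π - 2*q) = π - (2*q - x) := by ring
    have e2 : x + (π - 2*q) + 2*q = x + π := by ring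
    rw [e2, e1, psiF_sym hodd hanti, psiF_anti hanti]
    ring
  have step4 : (∫ x in (0:ℝ)..(2*q), -(psiF φ x * psiF φ (2*q - x))) = -WF φ (2*q) := by
    rw [intervalIntegral.integral_neg, WF]
  rw [step1, ← step2, step3, step4, neg_neg]

theorem WF_eq_FF_integral (hφ : ContDiff ℝ 3 φ) (q : ℝ) :
    WF φ (2*q) = ∫ t in (0:ℝ)..1, FF φ q t := by
  rcases eq_or_ne q 0 with rfl | hq
  · have h1 : WF φ (2*0) = 0 := by
      norm_num [WF, intervalIntegral.integral_same]
    have h2 : (∫ t in (0:ℝ)..1, FF φ 0 t) = 0 := by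
      have : ∀ t : ℝ, FF φ 0 t = 0 := by intro t; simp [FF]
      simp [this]
    rw [h1, h2]
  · have hc : (2*q) ≠ 0 := by simpa using hq
    have h := intervalIntegral.integral_comp_mul_left (a := (0:ℝ)) (b := 1)
      (fun s => psiF φ s * psiF φ (2*q - s)) hc
    rw [mul_zero, mul_one] at h
    have h2 : (∫ t in (0:ℝ)..1, FF φ q t)
        = (2*q) * ∫ t in (0:ℝ)..1, psiF φ (2*q*t) * psiF φ (2*q - 2*q*t) := by
      simp only [FF]
      rw [intervalIntegral.integral_const_mul]
    rw [h2, h, WF]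
    rw [smul_eq_mul]
    field_simp

theorem FF'_integral_eq (hφ : ContDiff ℝ 3 φ)
    (hodd : ∀ τ, φ (-τ) = -φ τ) {q : ℝ} (hq : q ≠ 0) :
    (∫ t in (0:ℝ)..1, FF' φ q t) = 2 * SF φ (2*q) := by
  have hφ1 : Differentiable ℝ φ := hφ.differentiable (by norm_num)
  have hψc := psiF_continuous hφ.continuous
  have hdψc := dpsiF_continuous hφ.continuous (hφ.continuous_deriv (by norm_num))
  have hψd : ∀ x, HasDerivAt (psiF φ) (dpsiF φ x) x := fun x => psiF_hasDerivAt hφ1 x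
  set c : ℝ := 2*q with hcdef
  have hc : c ≠ 0 := by simp [hcdef, hq]
  have hcont1 : Continuous fun s => psiF φ (c - s) :=
    hψc.comp (continuous_const.sub continuous_id)
  have hcont2 : Continuous fun s => dpsiF φ (c - s) :=
    hdψc.comp (continuous_const.sub continuous_id)
  -- the pulled-back integrand
  set Gg : ℝ → ℝ := fun s => 2*(psiF φ s * psiF φ (c - s))
      + 2*s*(dpsiF φ s * psiF φ (c - s)) + (2*c - 2*s)*(psiF φ s * dpsiF φ (c - s)) with hGg
  have hstep1 : (∫ t in (0:ℝ)..1, FF' φ q t) = ∫ t in (0:ℝ)..1, Gg (c*t) := by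
    apply intervalIntegral.integral_congr
    intro t _
    simp only [FF', hGg, hcdef]
    ring_nf
  have hstep2 : (∫ t in (0:ℝ)..1, Gg (c*t)) = c⁻¹ • ∫ s in (0:ℝ)..c, Gg s := by
    have h := intervalIntegral.integral_comp_mul_left (a := (0:ℝ)) (b := 1) Gg hc
    rw [mul_zero, mul_one] at h
    exact h
  -- abbreviations
  set A₂ : ℝ := ∫ s in (0:ℝ)..c, s*(dpsiF φ s * psiF φ (c - s)) with hA₂
  have hi1 : IntervalIntegrable (fun s => 2*(psiF φ s * psiF φ (c - s))) MeasureTheory.volume 0 c :=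
    (continuous_const.mul (hψc.mul hcont1)).intervalIntegrable 0 c
  have hi2 : IntervalIntegrable (fun s => 2*s*(dpsiF φ s * psiF φ (c - s)))
      MeasureTheory.volume 0 c :=
    ((continuous_const.mul continuous_id).mul (hdψc.mul hcont1)).intervalIntegrable 0 c
  have hi3 : IntervalIntegrable (fun s => (2*c - 2*s)*(psiF φ s * dpsiF φ (c - s)))
      MeasureTheory.volume 0 c :=
    ((continuous_const.sub (continuous_const.mul continuous_id)).mul
      (hψc.mul hcont2)).intervalIntegrable 0 c
  -- reflection: third summand equals 2 A₂
  have hrefl3 : (∫ s in (0:ℝ)..c, (c - s)*(psiF φ s * dpsiF φ (c - s))) = A₂ := by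
    have e1 : (∫ s in (0:ℝ)..c, (c - s)*(psiF φ s * dpsiF φ (c - s)))
        = ∫ s in (0:ℝ)..c, (fun x => x*(dpsiF φ x * psiF φ (c - x))) (c - s) := by
      apply intervalIntegral.integral_congr
      intro s _
      simp only
      rw [sub_sub_cancel]
      ring
    rw [e1, intervalIntegral.integral_comp_sub_left (fun x => x*(dpsiF φ x * psiF φ (c - x))) c]
    simp [hA₂]
  have hsplit : (∫ s in (0:ℝ)..c, Gg s) = 2 * WF φ c + 2*A₂ + 2*A₂ := by
    have e0 : (∫ s in (0:ℝ)..c, Gg s)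
        = (∫ s in (0:ℝ)..c, 2*(psiF φ s * psiF φ (c - s)))
          + (∫ s in (0:ℝ)..c, 2*s*(dpsiF φ s * psiF φ (c - s)))
          + (∫ s in (0:ℝ)..c, (2*c - 2*s)*(psiF φ s * dpsiF φ (c - s))) := by
      rw [← intervalIntegral.integral_add hi1 hi2, ← intervalIntegral.integral_add (hi1.add hi2) hi3]
    rw [e0]
    congr 1
    · congr 1
      · rw [intervalIntegral.integral_const_mul, WF]
      · have e1 : (∫ s in (0:ℝ)..c, 2*s*(dpsiF φ s * psiF φ (c - s)))
            = ∫ s in (0:ℝ)..c, 2*(s*(dpsiF φ s * psiF φ (c - s))) := by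
          apply intervalIntegral.integral_congr; intro s _; ring
        rw [e1, intervalIntegral.integral_const_mul, hA₂]
    · have e1 : (∫ s in (0:ℝ)..c, (2*c - 2*s)*(psiF φ s * dpsiF φ (c - s)))
          = ∫ s in (0:ℝ)..c, 2*((c - s)*(psiF φ s * dpsiF φ (c - s))) := by
        apply intervalIntegral.integral_congr; intro s _; ring
      rw [e1, intervalIntegral.integral_const_mul, hrefl3]
  -- FTC identity: A = WF φ c  where A = ∫ (c-2s) dψ(s) ψ(c-s)
  have hA : (∫ s in (0:ℝ)..c, (c - 2*s)*(dpsiF φ s * psiF φ (c - s))) = WF φ c := by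
    have h1 : ∀ s : ℝ, HasDerivAt (fun s => c - 2*s) (-2 : ℝ) s := by
      intro s
      simpa using ((hasDerivAt_id s).const_mul (2:ℝ)).const_sub c
    have h2 : ∀ s : ℝ, HasDerivAt (fun s => psiF φ (c - s)) (dpsiF φ (c - s)*(-1)) s := by
      intro s
      exact (hψd (c - s)).comp s ((hasDerivAt_id s).const_sub c)
    have h3 : ∀ s : ℝ, HasDerivAt (fun s => psiF φ s * psiF φ (c - s))
        (dpsiF φ s * psiF φ (c - s) + psiF φ s * (dpsiF φ (c - s)*(-1))) s := fun s =>
      (hψd s).mul (h2 s)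
    have hP : ∀ s : ℝ, HasDerivAt (fun s => (c - 2*s)*(psiF φ s * psiF φ (c - s)))
        ((-2)*(psiF φ s * psiF φ (c - s))
          + (c - 2*s)*(dpsiF φ s * psiF φ (c - s) + psiF φ s * (dpsiF φ (c - s)*(-1)))) s :=
      fun s => (h1 s).mul (h3 s)
    have hPcont : Continuous fun s => (-2)*(psiF φ s * psiF φ (c - s))
        + (c - 2*s)*(dpsiF φ s * psiF φ (c - s) + psiF φ s * (dpsiF φ (c - s)*(-1))) := by
      apply Continuous.add
      · exact continuous_const.mul (hψc.mul hcont1)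
      · exact (continuous_const.sub (continuous_const.mul continuous_id)).mul
          ((hdψc.mul hcont1).add (hψc.mul (hcont2.mul continuous_const)))
    have hFTC := intervalIntegral.integral_eq_sub_of_hasDerivAt
      (f := fun s => (c - 2*s)*(psiF φ s * psiF φ (c - s)))
      (fun s _ => hP s) (hPcont.intervalIntegrable 0 c)
    have hval : ((c - 2*c)*(psiF φ c * psiF φ (c - c)) - (c - 2*0)*(psiF φ 0 * psiF φ (c - 0))) = 0 := by
      rw [sub_self]
      simp [psiF_zero hodd]
    rw [hval] at hFTC
    -- split the FTC integral
    have hiA : IntervalIntegrable (fun s => (c - 2*s)*(dpsiF φ s * psiF φ (c - s)))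
        MeasureTheory.volume 0 c :=
      ((continuous_const.sub (continuous_const.mul continuous_id)).mul
        (hdψc.mul hcont1)).intervalIntegrable 0 c
    have hiB : IntervalIntegrable (fun s => (c - 2*s)*(psiF φ s * dpsiF φ (c - s)))
        MeasureTheory.volume 0 c :=
      ((continuous_const.sub (continuous_const.mul continuous_id)).mul
        (hψc.mul hcont2)).intervalIntegrable 0 c
    have hiW : IntervalIntegrable (fun s => (-2)*(psiF φ s * psiF φ (c - s)))
        MeasureTheory.volume 0 c :=
      (continuous_const.mul (hψc.mul hcont1)).intervalIntegrable 0 c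
    have esplit : (∫ s in (0:ℝ)..c, ((-2)*(psiF φ s * psiF φ (c - s))
          + (c - 2*s)*(dpsiF φ s * psiF φ (c - s) + psiF φ s * (dpsiF φ (c - s)*(-1)))))
        = (∫ s in (0:ℝ)..c, (-2)*(psiF φ s * psiF φ (c - s)))
          + ((∫ s in (0:ℝ)..c, (c - 2*s)*(dpsiF φ s * psiF φ (c - s)))
            - (∫ s in (0:ℝ)..c, (c - 2*s)*(psiF φ s * dpsiF φ (c - s)))) := by
      rw [← intervalIntegral.integral_sub hiA hiB, ← intervalIntegral.integral_add hiW (hiA.sub hiB)]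
      apply intervalIntegral.integral_congr
      intro s _
      simp only
      ring
    rw [esplit] at hFTC
    -- reflection gives B = -A
    have hBA : (∫ s in (0:ℝ)..c, (c - 2*s)*(psiF φ s * dpsiF φ (c - s)))
        = -(∫ s in (0:ℝ)..c, (c - 2*s)*(dpsiF φ s * psiF φ (c - s))) := by
      have e1 : (∫ s in (0:ℝ)..c, (c - 2*s)*(psiF φ s * dpsiF φ (c - s)))
          = ∫ s in (0:ℝ)..c, (fun x => (2*x - c)*(dpsiF φ x * psiF φ (c - x))) (c - s) := by
        apply intervalIntegral.integral_congr
        intro s _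
        simp only
        rw [sub_sub_cancel]
        ring
      rw [e1, intervalIntegral.integral_comp_sub_left
        (fun x => (2*x - c)*(dpsiF φ x * psiF φ (c - x))) c]
      rw [sub_self, sub_zero]
      rw [← intervalIntegral.integral_neg]
      apply intervalIntegral.integral_congr
      intro s _
      simp only
      ring
    rw [hBA] at hFTC
    have hW2 : (∫ s in (0:ℝ)..c, (-2)*(psiF φ s * psiF φ (c - s))) = (-2) * WF φ c := by
      rw [intervalIntegral.integral_const_mul, WF]
    rw [hW2] at hFTC
    linarith [hFTC]
  -- A = c * S - 2 A₂
  have hAS : (∫ s in (0:ℝ)..c, (c - 2*s)*(dpsiF φ s * psiF φ (c - s)))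
      = c * SF φ c - 2*A₂ := by
    have hiS : IntervalIntegrable (fun s => c*(dpsiF φ s * psiF φ (c - s)))
        MeasureTheory.volume 0 c :=
      (continuous_const.mul (hdψc.mul hcont1)).intervalIntegrable 0 c
    have hi2' : IntervalIntegrable (fun s => 2*(s*(dpsiF φ s * psiF φ (c - s))))
        MeasureTheory.volume 0 c :=
      (continuous_const.mul (continuous_id.mul (hdψc.mul hcont1))).intervalIntegrable 0 c
    have e1 : (∫ s in (0:ℝ)..c, (c - 2*s)*(dpsiF φ s * psiF φ (c - s)))
        = (∫ s in (0:ℝ)..c, c*(dpsiF φ s * psiF φ (c - s)))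
          - ∫ s in (0:ℝ)..c, 2*(s*(dpsiF φ s * psiF φ (c - s))) := by
      rw [← intervalIntegral.integral_sub hiS hi2']
      apply intervalIntegral.integral_congr
      intro s _
      simp only
      ring
    rw [e1, intervalIntegral.integral_const_mul, intervalIntegral.integral_const_mul, hA₂, SF]
  -- put everything together
  rw [hstep1, hstep2, hsplit]
  rw [hAS] at hA
  have : 2 * WF φ c + 2*A₂ + 2*A₂ = 2 * (c * SF φ c) := by linarith
  rw [this, smul_eq_mul]
  field_simp

end ints


/-- Properties of `I(q) = -∫_{π-2q}^{π} φ̈(τ)φ̈(τ+2q) dτ` on `[0, π/2]`: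
it vanishes at 0, is nonnegative, is C¹ with nonnegative derivative (hence
nondecreasing), and `I(π/2) = ∫₀^π φ̈²`. -/
theorem properties_of_I
    (φ : ℝ → ℝ) (hφ : ContDiff ℝ 3 φ)
    (hper : Function.Periodic φ (2 * π))
    (hode : ∀ τ, deriv (deriv φ) τ + |φ τ| ^ ((1:ℝ)/2) * φ τ = 0)
    (hodd : ∀ τ, φ (-τ) = -φ τ)
    (hanti : ∀ τ, φ (τ + π) = -φ τ)
    (hpos : ∀ τ ∈ Set.Icc (0:ℝ) π, 0 ≤ φ τ)
    (hder : ∀ τ ∈ Set.Icc (0:ℝ) (π/2), 0 ≤ deriv φ τ) :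
    (-(∫ τ in (π - 2 * (0:ℝ))..π,
        deriv (deriv φ) τ * deriv (deriv φ) (τ + 2 * (0:ℝ)))) = 0 ∧
    (∀ q ∈ Set.Icc (0:ℝ) (π/2),
      0 ≤ -(∫ τ in (π - 2 * q)..π,
        deriv (deriv φ) τ * deriv (deriv φ) (τ + 2 * q))) ∧
    (∃ I' : ℝ → ℝ, ContinuousOn I' (Set.Icc 0 (π/2)) ∧
      (∀ q ∈ Set.Icc (0:ℝ) (π/2),
        HasDerivWithinAt (fun q : ℝ =>
            -(∫ τ in (π - 2 * q)..π,
              deriv (deriv φ) τ * deriv (deriv φ) (τ + 2 * q)))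
          (I' q) (Set.Icc 0 (π/2)) q) ∧
      (∀ q ∈ Set.Icc (0:ℝ) (π/2), 0 ≤ I' q)) ∧
    MonotoneOn (fun q : ℝ =>
        -(∫ τ in (π - 2 * q)..π,
          deriv (deriv φ) τ * deriv (deriv φ) (τ + 2 * q)))
      (Set.Icc 0 (π/2)) ∧
    (-(∫ τ in (π - 2 * (π/2))..π,
        deriv (deriv φ) τ * deriv (deriv φ) (τ + 2 * (π/2))))
      = ∫ τ in (0:ℝ)..π, (deriv (deriv φ) τ) ^ 2 := by
  have hπ : (0:ℝ) < π := Real.pi_pos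
  have hφ1 : Differentiable ℝ φ := hφ.differentiable (by norm_num)
  have hdc : Continuous (deriv φ) := hφ.continuous_deriv (by norm_num)
  have hψc := psiF_continuous hφ.continuous
  have hIW := neg_int_eq_WF hφ hode hodd hanti
  have hWFF := WF_eq_FF_integral hφ
  have hfeq : (fun q : ℝ => -(∫ τ in (π - 2 * q)..π,
      deriv (deriv φ) τ * deriv (deriv φ) (τ + 2 * q)))
      = fun q => ∫ t in (0:ℝ)..1, FF φ q t :=
    funext fun q => (hIW q).trans (hWFF q)
  have hderint := FF_integral_hasDerivAt hφ.continuous hdc hφ1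
  have hWnn : ∀ q ∈ Set.Icc (0:ℝ) (π/2), 0 ≤ WF φ (2*q) := by
    intro q hq
    apply intervalIntegral.integral_nonneg (by linarith [hq.1] : (0:ℝ) ≤ 2*q)
    intro s hs
    have h1 : 0 ≤ psiF φ s := psiF_nonneg hpos hs.1 (by linarith [hs.2, hq.2])
    have h2 : 0 ≤ psiF φ (2*q - s) :=
      psiF_nonneg hpos (by linarith [hs.2]) (by linarith [hs.1, hq.2])
    positivity
  have hI'nn : ∀ q ∈ Set.Icc (0:ℝ) (π/2), 0 ≤ ∫ t in (0:ℝ)..1, FF' φ q t := by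
    intro q hq
    rcases eq_or_lt_of_le hq.1 with h0 | h0
    · have hz : ∀ t : ℝ, FF' φ q t = 0 := by
        intro t
        rw [← h0]
        simp [FF', psiF_zero hodd]
      simp [hz]
    · rw [FF'_integral_eq hφ hodd (ne_of_gt h0)]
      have := SF_nonneg hφ hode hodd hanti hpos hder
        (by linarith : (0:ℝ) ≤ 2*q) (by linarith [hq.2] : 2*q ≤ π)
      linarith
  refine ⟨?_, ?_, ?_, ?_, ?_⟩
  · rw [hIW 0]
    norm_num [WF, intervalIntegral.integral_same]
  · intro q hq
    rw [hIW q]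
    exact hWnn q hq
  · refine ⟨fun q => ∫ t in (0:ℝ)..1, FF' φ q t, ?_, ?_, hI'nn⟩
    · apply Continuous.continuousOn
      exact intervalIntegral.continuous_parametric_intervalIntegral_of_continuous'
        (f := FF' φ) (FF'_uncurry_continuous hφ.continuous hdc) 0 1
    · intro q _
      rw [hfeq]
      exact (hderint q).hasDerivWithinAt
  · rw [hfeq]
    apply monotoneOn_of_deriv_nonneg (convex_Icc _ _)
    · exact (intervalIntegral.continuous_parametric_intervalIntegral_of_continuous'
        (f := FF φ) (FF_uncurry_continuous hφ.continuous) 0 1).continuousOn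
    · intro x _
      exact (hderint x).differentiableAt.differentiableWithinAt
    · intro x hx
      rw [interior_Icc] at hx
      rw [(hderint x).deriv]
      exact hI'nn x ⟨le_of_lt hx.1, le_of_lt hx.2⟩
  · have h2q : 2*(π/2) = π := by ring
    rw [h2q, sub_self]
    have hodeψ : ∀ τ, deriv (deriv φ) τ = -psiF φ τ := by
      intro τ; have := hode τ; simp only [psiF]; linarith
    have e : (∫ τ in (0:ℝ)..π, deriv (deriv φ) τ * deriv (deriv φ) (τ + π))
        = ∫ τ in (0:ℝ)..π, -((deriv (deriv φ) τ)^2) := by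
      apply intervalIntegral.integral_congr
      intro τ _
      show deriv (deriv φ) τ * deriv (deriv φ) (τ + π) = -((deriv (deriv φ) τ)^2)
      rw [hodeψ τ, hodeψ (τ + π), psiF_anti hanti]
      ring
    rw [e, intervalIntegral.integral_neg, neg_neg]
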